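/- Let a, b, c, p ∈ ℝ³, let y(λ, μ) = (1 − λ) a + λ((1 − μ) b + μ c), and suppose y(λ, μ) ≠ p. Define v(λ, μ) = (y(λ, μ) − p)/‖y(λ, μ) − p‖ and x(λ, μ, σ) = y(λ, μ) + σ v(λ, μ). Then the determinant of the Jacobian matrix of x with respect to the ordered variables (σ, λ, μ) equals (1 + σ/‖y(λ, μ) − p‖)² · λ · [v(λ, μ) · ((b − a) × (c − b))]. -/

import Mathlib

open scoped RealInnerProductSpace

noncomputable def cross3 (u v : EuclideanSpace ℝ (Fin 3)) : EuclideanSpace ℝ (Fin 3) :=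
  (WithLp.equiv 2 (Fin 3 → ℝ)).symm
    (crossProduct ((WithLp.equiv 2 (Fin 3 → ℝ)) u) ((WithLp.equiv 2 (Fin 3 → ℝ)) v))

noncomputable def pr (i : Fin 3) : EuclideanSpace ℝ (Fin 3) →L[ℝ] ℝ := EuclideanSpace.proj i
@[simp] lemma pr_apply (i : Fin 3) (x : EuclideanSpace ℝ (Fin 3)) : pr i x = x i := rfl

lemma cross3_apply0 (u v : EuclideanSpace ℝ (Fin 3)) :
    cross3 u v 0 = u 1 * v 2 - u 2 * v 1 := by simp [cross3, cross_apply]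
lemma cross3_apply1 (u v : EuclideanSpace ℝ (Fin 3)) :
    cross3 u v 1 = u 2 * v 0 - u 0 * v 2 := by simp [cross3, cross_apply]
lemma cross3_apply2 (u v : EuclideanSpace ℝ (Fin 3)) :
    cross3 u v 2 = u 0 * v 1 - u 1 * v 0 := by simp [cross3, cross_apply]

set_option maxHeartbeats 2000000 in
theorem det_jacobian_sliver_param_triangle
    (a b c p : EuclideanSpace ℝ (Fin 3))
    (y : ℝ → ℝ → EuclideanSpace ℝ (Fin 3))
    (hy : ∀ lam mu : ℝ, y lam mu = (1 - lam) • a + lam • ((1 - mu) • b + mu • c))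
    (v : ℝ → ℝ → EuclideanSpace ℝ (Fin 3))
    (hv : ∀ lam mu : ℝ, v lam mu = ‖y lam mu - p‖⁻¹ • (y lam mu - p))
    (x : EuclideanSpace ℝ (Fin 3) → EuclideanSpace ℝ (Fin 3))
    (hx : ∀ q : EuclideanSpace ℝ (Fin 3), x q = y (q 1) (q 2) + q 0 • v (q 1) (q 2)) :
    ∀ q : EuclideanSpace ℝ (Fin 3), y (q 1) (q 2) ≠ p →
      LinearMap.det (fderiv ℝ x q :
          EuclideanSpace ℝ (Fin 3) →ₗ[ℝ] EuclideanSpace ℝ (Fin 3)) =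
        (1 + q 0 / ‖y (q 1) (q 2) - p‖) ^ 2 * q 1 *
          ⟪v (q 1) (q 2), cross3 (b - a) (c - b)⟫ := by
  intro q hq
  classical
  set d1 : EuclideanSpace ℝ (Fin 3) := b - a with hd1
  set d2 : EuclideanSpace ℝ (Fin 3) := c - b with hd2
  set a0 : EuclideanSpace ℝ (Fin 3) := a - p with ha0
  have hune : y (q 1) (q 2) - p ≠ 0 := sub_ne_zero.mpr hq
  set u : EuclideanSpace ℝ (Fin 3) := y (q 1) (q 2) - p with hu
  set r : ℝ := ‖u‖ with hr
  have hrne : r ≠ 0 := norm_ne_zero_iff.mpr hune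
  set W : EuclideanSpace ℝ (Fin 3) → EuclideanSpace ℝ (Fin 3) :=
    fun s => a0 + s 1 • d1 + (s 1 * s 2) • d2 with hWdef
  have key : ∀ s : EuclideanSpace ℝ (Fin 3), y (s 1) (s 2) - p = W s := by
    intro s
    rw [hy, hWdef, hd1, hd2, ha0]
    module
  have hWq : W q = u := (key q).symm
  have hWqne : W q ≠ 0 := by rw [hWq]; exact hune
  have hp : ∀ i : Fin 3, HasFDerivAt (fun s : EuclideanSpace ℝ (Fin 3) => s i) (pr i) q :=
    fun i => (pr i).hasFDerivAt
  set DW : EuclideanSpace ℝ (Fin 3) →L[ℝ] EuclideanSpace ℝ (Fin 3) :=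
    (pr 1).smulRight d1 + (q 2 • pr 1 + q 1 • pr 2).smulRight d2 with hDWdef
  have hDW : HasFDerivAt W DW q := by
    have h := ((hasFDerivAt_const a0 q).add ((hp 1).smul_const d1)).add
      (((hp 1).mul (hp 2)).smul_const d2)
    refine h.congr_fderiv (Eq.symm ?_)
    refine ContinuousLinearMap.ext fun e => ?_
    show (DW e : EuclideanSpace ℝ (Fin 3)) = _
    simp only [hDWdef, ContinuousLinearMap.add_apply, ContinuousLinearMap.smulRight_apply,
      ContinuousLinearMap.smul_apply, ContinuousLinearMap.zero_apply, smul_eq_mul, zero_add,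
      pr_apply]
    module
  set Dn : EuclideanSpace ℝ (Fin 3) →L[ℝ] ℝ := r⁻¹ • ((innerSL ℝ u).comp DW) with hDndef
  have hn : HasFDerivAt (fun s => ‖W s‖) Dn q := by
    have h1 : HasFDerivAt (fun s => ‖W s‖ ^ 2) ((2 • innerSL ℝ (W q)).comp DW) q := hDW.norm_sq
    have h2 : HasDerivAt Real.sqrt (1 / (2 * Real.sqrt (‖W q‖ ^ 2))) (‖W q‖ ^ 2) :=
      Real.hasDerivAt_sqrt (pow_ne_zero 2 (norm_ne_zero_iff.mpr hWqne))
    have h3 := h2.comp_hasFDerivAt q h1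
    simp only [Function.comp_def] at h3
    rw [show (fun s => Real.sqrt (‖W s‖ ^ 2)) = fun s => ‖W s‖ from
      funext fun s => Real.sqrt_sq (norm_nonneg _)] at h3
    refine h3.congr_fderiv (Eq.symm ?_)
    rw [hWq, Real.sqrt_sq (norm_nonneg u), hDndef]
    refine ContinuousLinearMap.ext fun e => ?_
    simp only [ContinuousLinearMap.smul_apply, ContinuousLinearMap.comp_apply, smul_eq_mul,
      nsmul_eq_mul, Nat.cast_ofNat]
    rw [← hr]
    field_simp
  have hninv : HasFDerivAt (fun s => (‖W s‖)⁻¹) ((-(r ^ 2)⁻¹) • Dn) q := by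
    have h := (hasDerivAt_inv (x := ‖W q‖) (by rw [hWq]; exact hrne)).comp_hasFDerivAt q hn
    simp only [Function.comp_def] at h
    refine h.congr_fderiv (Eq.symm ?_)
    rw [hWq, ← hr]
  set f : EuclideanSpace ℝ (Fin 3) → ℝ := fun s => 1 + s 0 * (‖W s‖)⁻¹ with hfdef
  set Df : EuclideanSpace ℝ (Fin 3) →L[ℝ] ℝ :=
    r⁻¹ • pr 0 + (q 0 : ℝ) • ((-(r ^ 2)⁻¹) • Dn) with hDfdef
  have hf : HasFDerivAt f Df q := by
    have h := (hasFDerivAt_const (1 : ℝ) q).add ((hp 0).mul hninv)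
    refine h.congr_fderiv (Eq.symm ?_)
    rw [hDfdef]
    refine ContinuousLinearMap.ext fun e => ?_
    simp only [ContinuousLinearMap.add_apply, ContinuousLinearMap.smul_apply,
      ContinuousLinearMap.zero_apply, smul_eq_mul, zero_add, pr_apply]
    rw [hWq, ← hr]
    ring
  have hxeq : x = fun s => p + f s • W s := by
    funext s
    have k := key s
    have hy2 : y (s 1) (s 2) = W s + p := by rw [← k]; abel
    rw [hx s, hv, hy2, hfdef]
    simp only [add_sub_cancel_right]
    module
  set L : EuclideanSpace ℝ (Fin 3) →L[ℝ] EuclideanSpace ℝ (Fin 3) :=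
    (1 + q 0 * r⁻¹) • DW + Df.smulRight u with hLdef
  have hL : HasFDerivAt x L q := by
    have h := (hasFDerivAt_const p q).add (hf.smul hDW)
    rw [show (fun _ => p) + f • W = x from by rw [hxeq]; rfl] at h
    refine h.congr_fderiv (Eq.symm ?_)
    rw [zero_add]
    have hfq : f q = 1 + q 0 * r⁻¹ := by rw [hfdef]; simp only []; rw [hWq, ← hr]
    rw [hLdef, hfq, hWq]
  -- values of DW on basis vectors
  have hDW0 : DW (EuclideanSpace.single 0 1) = 0 := by
    rw [hDWdef]
    refine PiLp.ext fun i => ?_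
    simp [EuclideanSpace.single_apply, PiLp.add_apply, PiLp.smul_apply]
  have hDW1 : DW (EuclideanSpace.single 1 1) = d1 + q 2 • d2 := by
    rw [hDWdef]
    refine PiLp.ext fun i => ?_
    simp [EuclideanSpace.single_apply, PiLp.add_apply, PiLp.smul_apply]
  have hDW2 : DW (EuclideanSpace.single 2 1) = q 1 • d2 := by
    rw [hDWdef]
    refine PiLp.ext fun i => ?_
    simp [EuclideanSpace.single_apply, PiLp.add_apply, PiLp.smul_apply]
  have hDf0 : Df (EuclideanSpace.single 0 1) = r⁻¹ := by
    rw [hDfdef, hDndef]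
    simp [EuclideanSpace.single_apply, hDW0]
  -- values of L on basis vectors, coordinatewise
  have hL0 : ∀ i, L (EuclideanSpace.single 0 1) i = r⁻¹ * u i := by
    intro i
    rw [hLdef]
    simp [hDW0, hDf0, PiLp.add_apply, PiLp.smul_apply]
  have hL1 : ∀ i, L (EuclideanSpace.single 1 1) i =
      (1 + q 0 * r⁻¹) * (d1 i + q 2 * d2 i) + Df (EuclideanSpace.single 1 1) * u i := by
    intro i
    rw [hLdef]
    simp only [ContinuousLinearMap.add_apply, ContinuousLinearMap.smul_apply,
      ContinuousLinearMap.smulRight_apply, hDW1, PiLp.add_apply, PiLp.smul_apply, smul_eq_mul]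
  have hL2 : ∀ i, L (EuclideanSpace.single 2 1) i =
      (1 + q 0 * r⁻¹) * (q 1 * d2 i) + Df (EuclideanSpace.single 2 1) * u i := by
    intro i
    rw [hLdef]
    simp only [ContinuousLinearMap.add_apply, ContinuousLinearMap.smul_apply,
      ContinuousLinearMap.smulRight_apply, hDW2, PiLp.add_apply, PiLp.smul_apply, smul_eq_mul]
  -- determinant computation
  rw [hL.fderiv]
  rw [← LinearMap.det_toMatrix (EuclideanSpace.basisFun (Fin 3) ℝ).toBasis,
    Matrix.det_fin_three]
  rw [hv]
  rw [← hu]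
  show _ = (1 + q 0 / r) ^ 2 * q 1 * ⟪r⁻¹ • u, cross3 d1 d2⟫
  rw [real_inner_smul_left]
  simp only [LinearMap.toMatrix_apply, OrthonormalBasis.coe_toBasis,
    OrthonormalBasis.coe_toBasis_repr_apply, EuclideanSpace.basisFun_repr,
    EuclideanSpace.basisFun_apply, ContinuousLinearMap.coe_coe, hL0, hL1, hL2,
    PiLp.inner_apply, RCLike.inner_apply, conj_trivial, Fin.sum_univ_three,
    cross3_apply0, cross3_apply1, cross3_apply2]
  field_simp
  ring
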